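/- Let (n^{(m)}) be a sequence of unit vectors in ℝ^{d_in} converging to a unit vector n, (o^{(m)}) reals converging to o ∈ ℝ, (δ^{(m)}) ⊂ ℝ^{d_in} converging to δ, and (𝔟^{(m)}) ⊂ ℝ converging to 𝔟. Assume for each m that {x : n^{(m)}·x = o^{(m)}} ⊆ {x : δ^{(m)}·x + 𝔟^{(m)} = 0} (each summand is continuous). Then {x : n·x = o} ⊆ {x : δ·x + 𝔟 = 0}, i.e. the limit summand x ↦ 1_{\{n·x>o\}}(x)(δ·x + 𝔟) is also continuous; moreover δ is a scalar multiple of n and δ·(o n) + 𝔟 = 0. -/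

import Mathlib

open Filter

/-- continuity (multiplicity one) of summands passes to the limit:
if each hyperplane `{n⁽ᵐ⁾·x = o⁽ᵐ⁾}` is contained in the zero set of
`δ⁽ᵐ⁾·x + 𝔟⁽ᵐ⁾` and all data converge, then the limit hyperplane is contained in the
zero set of `δ·x + 𝔟`; moreover `δ` is a multiple of `n` and `δ·(o n) + 𝔟 = 0`. -/
theorem stmt19 (din : ℕ) (hdin : 1 ≤ din)
    (ns : ℕ → EuclideanSpace ℝ (Fin din)) (hns : ∀ m, ‖ns m‖ = 1)
    (n : EuclideanSpace ℝ (Fin din)) (hn : ‖n‖ = 1)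
    (hnconv : Tendsto ns atTop (nhds n))
    (os : ℕ → ℝ) (o : ℝ) (hoconv : Tendsto os atTop (nhds o))
    (δs : ℕ → EuclideanSpace ℝ (Fin din)) (δ : EuclideanSpace ℝ (Fin din))
    (hδconv : Tendsto δs atTop (nhds δ))
    (bs : ℕ → ℝ) (𝔟 : ℝ) (hbconv : Tendsto bs atTop (nhds 𝔟))
    (hincl : ∀ m, {x : EuclideanSpace ℝ (Fin din) | (inner ℝ (ns m) x : ℝ) = os m} ⊆
      {x : EuclideanSpace ℝ (Fin din) | (inner ℝ (δs m) x : ℝ) + bs m = 0}) :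
    ({x : EuclideanSpace ℝ (Fin din) | (inner ℝ n x : ℝ) = o} ⊆
      {x : EuclideanSpace ℝ (Fin din) | (inner ℝ δ x : ℝ) + 𝔟 = 0}) ∧
    (∃ c : ℝ, δ = c • n) ∧ (inner ℝ δ (o • n) : ℝ) + 𝔟 = 0 := by
  have hnn : (inner ℝ n n : ℝ) = 1 := by
    rw [real_inner_self_eq_norm_sq, hn]; norm_num
  have hmain : {x : EuclideanSpace ℝ (Fin din) | (inner ℝ n x : ℝ) = o} ⊆
      {x : EuclideanSpace ℝ (Fin din) | (inner ℝ δ x : ℝ) + 𝔟 = 0} := by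
    intro x hx
    simp only [Set.mem_setOf_eq] at hx ⊢
    set xm : ℕ → EuclideanSpace ℝ (Fin din) :=
      fun m => x + (os m - (inner ℝ (ns m) x : ℝ)) • ns m with hxm
    have hon : ∀ m, (inner ℝ (ns m) (xm m) : ℝ) = os m := by
      intro m
      have h1 : (inner ℝ (ns m) (ns m) : ℝ) = 1 := by
        rw [real_inner_self_eq_norm_sq, hns m]; norm_num
      show (inner ℝ (ns m) (x + (os m - (inner ℝ (ns m) x : ℝ)) • ns m) : ℝ) = os m
      rw [inner_add_right, real_inner_smul_right, h1]; ring
    have hzero : ∀ m, (inner ℝ (δs m) (xm m) : ℝ) + bs m = 0 := fun m =>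
      hincl m (hon m)
    have hxconv : Tendsto xm atTop (nhds x) := by
      have h2 : Tendsto (fun m => (inner ℝ (ns m) x : ℝ)) atTop (nhds (inner ℝ n x : ℝ)) :=
        hnconv.inner tendsto_const_nhds
      have : Tendsto xm atTop (nhds (x + (o - (inner ℝ n x : ℝ)) • n)) :=
        tendsto_const_nhds.add ((hoconv.sub h2).smul hnconv)
      simpa [hx] using this
    have hlim : Tendsto (fun m => (inner ℝ (δs m) (xm m) : ℝ) + bs m) atTop
        (nhds ((inner ℝ δ x : ℝ) + 𝔟)) := (hδconv.inner hxconv).add hbconv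
    have hlim0 : Tendsto (fun _ : ℕ => (0 : ℝ)) atTop
        (nhds ((inner ℝ δ x : ℝ) + 𝔟)) := hlim.congr hzero
    exact (tendsto_nhds_unique hlim0 tendsto_const_nhds)
  have h3 : (inner ℝ δ (o • n) : ℝ) + 𝔟 = 0 := by
    apply hmain
    show (inner ℝ n (o • n) : ℝ) = o
    rw [real_inner_smul_right, hnn]; ring
  refine ⟨hmain, ⟨(inner ℝ δ n : ℝ), ?_⟩, h3⟩
  set v : EuclideanSpace ℝ (Fin din) := δ - (inner ℝ δ n : ℝ) • n with hv
  have hnv : (inner ℝ n v : ℝ) = 0 := by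
    rw [hv, inner_sub_right, real_inner_smul_right, hnn, real_inner_comm n δ]; ring
  have hxon : (inner ℝ n (o • n + v) : ℝ) = o := by
    show (inner ℝ n (o • n + v) : ℝ) = o
    rw [inner_add_right, real_inner_smul_right, hnn, hnv]; ring
  have hδx : (inner ℝ δ (o • n + v) : ℝ) + 𝔟 = 0 := hmain hxon
  have hδv : (inner ℝ δ v : ℝ) = 0 := by
    have := hδx
    rw [inner_add_right] at this
    linarith [h3]
  have hvv : (inner ℝ v v : ℝ) = 0 := by
    rw [hv, inner_sub_left, real_inner_smul_left]
    rw [← hv, hδv, hnv]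
    ring
  have hv0 : v = 0 := inner_self_eq_zero.mp hvv
  have : δ - (inner ℝ δ n : ℝ) • n = 0 := hv0
  linear_combination (norm := module) this
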